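/- Let q be a probability distribution on [n], let m > 0 be a real number, and let X_i be a random variable distributed as Poi(m·q_i). Set Z_i = (X_i − m/n)² − X_i and Δ_i = 1/n − q_i. Then Var[Z_i] = 2m²·(Δ_i − 1/n)² + 4m³·(1/n − Δ_i)·Δ_i². -/

import Mathlib

open Finset ProbabilityTheory MeasureTheory

/-- The probability mass that a function on `Fin n` assigns to the (0-indexed)
interval `[a, b)`. -/
noncomputable def intervalMass {n : ℕ} (q : Fin n → ℝ) (a b : ℕ) : ℝ :=
  ∑ j ∈ Finset.univ.filter (fun j : Fin n => a ≤ (j : ℕ) ∧ (j : ℕ) < b), q j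

/-- `q` is a probability distribution on `[n]` (identified with `Fin n`). -/
noncomputable def IsDist {n : ℕ} (q : Fin n → ℝ) : Prop := (∀ i, 0 ≤ q i) ∧ ∑ i, q i = 1

/-- The `A_k` distance between `p` and `q` on `Fin n`: the supremum, over all partitions of
`Fin n` into `k` consecutive intervals (described by their monotone sequence of boundary
points), of the sum of the discrepancies `|p(I) - q(I)|` over the intervals. -/
noncomputable def AkDist (n k : ℕ) (p q : Fin n → ℝ) : ℝ :=
  sSup { x : ℝ | ∃ b : Fin (k + 1) → ℕ, Monotone b ∧ b 0 = 0 ∧ b (Fin.last k) = n ∧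
    x = ∑ i : Fin k,
      |intervalMass p (b i.castSucc) (b i.succ) - intervalMass q (b i.castSucc) (b i.succ)| }

/-- The `L1` distance between two functions on `Fin n`. -/
noncomputable def L1Dist {n : ℕ} (p q : Fin n → ℝ) : ℝ := ∑ i, |p i - q i|

/-- The `L2` distance between two functions on `Fin n`. -/
noncomputable def L2Dist {n : ℕ} (p q : Fin n → ℝ) : ℝ := Real.sqrt (∑ i, (p i - q i) ^ 2)

/-- The uniform distribution on `Fin n`. -/
noncomputable def unif (n : ℕ) : Fin n → ℝ := fun _ => 1 / n

/-- The probability that the `m`-fold product measure `q^{⊗m}` assigns to a set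
`A ⊆ [n]^m` of sample sequences. -/
noncomputable def prodProb {n m : ℕ} (q : Fin n → ℝ) (A : Finset (Fin m → Fin n)) : ℝ :=
  ∑ x ∈ A, ∏ j, q (x j)

/-- The reduced distribution of `q` w.r.t. the partition of `Fin n` into `ℓ` consecutive
intervals of equal length `n / ℓ` (assuming `ℓ ∣ n`). -/
noncomputable def reducedDist {n : ℕ} (q : Fin n → ℝ) (ℓ : ℕ) : Fin ℓ → ℝ :=
  fun i => intervalMass q ((i : ℕ) * (n / ℓ)) (((i : ℕ) + 1) * (n / ℓ))

/-- `p` is a `t`-piecewise degree-`d` function on `Fin n`: there is a partition of `Fin n`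
into `t` consecutive intervals on each of which `p` agrees with a real polynomial of degree
at most `d`. -/
noncomputable def IsPiecewisePoly {n : ℕ} (t d : ℕ) (p : Fin n → ℝ) : Prop :=
  ∃ b : Fin (t + 1) → ℕ, Monotone b ∧ b 0 = 0 ∧ b (Fin.last t) = n ∧
    ∀ i : Fin t, ∃ P : Polynomial ℝ, P.degree ≤ (d : ℕ) ∧
      ∀ x : Fin n, b i.castSucc ≤ (x : ℕ) → (x : ℕ) < b i.succ → p x = P.eval ((x : ℕ) : ℝ)

/-- `q` is `k`-flat: there is a partition of `Fin n` into `k` consecutive intervals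
on each of which `q` is constant. -/
noncomputable def IsKFlat {n : ℕ} (k : ℕ) (q : Fin n → ℝ) : Prop :=
  ∃ b : Fin (k + 1) → ℕ, Monotone b ∧ b 0 = 0 ∧ b (Fin.last k) = n ∧
    ∀ i : Fin k, ∃ c : ℝ, ∀ x : Fin n, b i.castSucc ≤ (x : ℕ) → (x : ℕ) < b i.succ → q x = c

/-- The term `Discr(I)² / width(I)^{1/8}` for the interval `I = [a, b)` in `Fin n`, where
the discrepancy is `Discr(I) = |q(I) - U_n(I)|` and the width is `|I|/n` (relative to the
uniform distribution `U_n`). -/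
noncomputable def ssTerm {n : ℕ} (q : Fin n → ℝ) (a b : ℕ) : ℝ :=
  |intervalMass q a b - ((b - a : ℕ) : ℝ) / n| ^ 2 / (((b - a : ℕ) : ℝ) / n) ^ ((1 : ℝ) / 8)

/-- The squared scale-sensitive-`L2` distance between `q` and the uniform distribution
on `Fin n`, at scale `1/k`: the supremum, over all partitions of `Fin n` into consecutive
nonempty intervals each of width at most `1/k`, of `∑ Discr(I)² / width(I)^{1/8}`. -/
noncomputable def ssDistSq (n k : ℕ) (q : Fin n → ℝ) : ℝ :=
  sSup { x : ℝ | ∃ r : ℕ, ∃ b : Fin (r + 1) → ℕ, StrictMono b ∧ b 0 = 0 ∧ b (Fin.last r) = n ∧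
    (∀ i : Fin r, ((b i.succ - b i.castSucc : ℕ) : ℝ) / n ≤ 1 / k) ∧
    x = ∑ i : Fin r, ssTerm q (b i.castSucc) (b i.succ) }
open scoped NNReal ENNReal

lemma hasSum_poisson_descFactorial (r : ℝ≥0) (k : ℕ) :
    HasSum (fun n => poissonPMFReal r n * (n.descFactorial k : ℝ)) ((r : ℝ) ^ k) := by
  have key : ∀ j : ℕ, poissonPMFReal r (j + k) * ((j + k).descFactorial k : ℝ)
      = poissonPMFReal r j * (r : ℝ) ^ k := by
    intro j
    have hfac : ((j.factorial : ℕ) : ℝ) * (((j + k).descFactorial k : ℕ) : ℝ)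
        = (((j + k).factorial : ℕ) : ℝ) := by
      have := Nat.factorial_mul_descFactorial (show k ≤ j + k by omega)
      rw [show j + k - k = j by omega] at this
      exact_mod_cast congrArg (Nat.cast : ℕ → ℝ) this
    unfold poissonPMFReal
    have hj : ((j.factorial : ℕ) : ℝ) ≠ 0 := by positivity
    have hjk : (((j + k).factorial : ℕ) : ℝ) ≠ 0 := by positivity
    field_simp
    rw [pow_add]
    linear_combination (r : ℝ) ^ j * (r : ℝ) ^ k * hfac
  have h1 : HasSum (fun j : ℕ => poissonPMFReal r j * (r : ℝ) ^ k) ((r : ℝ) ^ k) := by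
    simpa [mul_comm] using (show HasSum (fun j => poissonPMFReal r j) 1 from poissonPMFRealSum r).mul_left ((r : ℝ) ^ k)
  have hinj : Function.Injective (fun j : ℕ => j + k) := add_left_injective k
  have hzero : ∀ n ∉ Set.range (fun j : ℕ => j + k),
      poissonPMFReal r n * (n.descFactorial k : ℝ) = 0 := by
    intro n hn
    have hlt : n < k := by
      by_contra h; exact hn ⟨n - k, show n - k + k = n by omega⟩
    rw [Nat.descFactorial_eq_zero_iff_lt.2 hlt]; simp
  rw [← hinj.hasSum_iff hzero]
  have heq : ((fun n => poissonPMFReal r n * (n.descFactorial k : ℝ)) ∘ fun j => j + k)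
      = fun j => poissonPMFReal r j * (r : ℝ) ^ k := funext key
  rw [heq]; exact h1

lemma cast_desc2 (n : ℕ) : ((n.descFactorial 2 : ℕ) : ℝ) = n * (n - 1) := by
  rcases n with _ | _ | n <;>
    simp [Nat.descFactorial_succ, Nat.descFactorial] <;> push_cast <;> ring

lemma cast_desc3 (n : ℕ) : ((n.descFactorial 3 : ℕ) : ℝ) = n * (n - 1) * (n - 2) := by
  rcases n with _ | _ | _ | n <;>
    simp [Nat.descFactorial_succ, Nat.descFactorial] <;> push_cast <;> ring

lemma cast_desc4 (n : ℕ) :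
    ((n.descFactorial 4 : ℕ) : ℝ) = n * (n - 1) * (n - 2) * (n - 3) := by
  rcases n with _ | _ | _ | _ | n <;>
    simp [Nat.descFactorial_succ, Nat.descFactorial] <;> push_cast <;> ring

lemma poisson_hasSum_pow1 (r : ℝ≥0) :
    HasSum (fun n => poissonPMFReal r n * (n : ℝ)) ((r : ℝ)) := by
  simpa using hasSum_poisson_descFactorial r 1

lemma poisson_hasSum_pow2 (r : ℝ≥0) :
    HasSum (fun n => poissonPMFReal r n * (n : ℝ) ^ 2) ((r : ℝ) ^ 2 + (r : ℝ)) := by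
  have h := (hasSum_poisson_descFactorial r 2).add (poisson_hasSum_pow1 r)
  have heq : (fun n => poissonPMFReal r n * (n.descFactorial 2 : ℝ)
      + poissonPMFReal r n * (n : ℝ)) = fun n => poissonPMFReal r n * (n : ℝ) ^ 2 := by
    funext n; rw [cast_desc2]; ring
  rwa [heq] at h

lemma poisson_hasSum_pow3 (r : ℝ≥0) :
    HasSum (fun n => poissonPMFReal r n * (n : ℝ) ^ 3)
      ((r : ℝ) ^ 3 + 3 * (r : ℝ) ^ 2 + (r : ℝ)) := by
  have h := ((hasSum_poisson_descFactorial r 3).add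
    ((hasSum_poisson_descFactorial r 2).mul_left 3)).add (poisson_hasSum_pow1 r)
  have heq : (fun n => (poissonPMFReal r n * (n.descFactorial 3 : ℝ)
      + 3 * (poissonPMFReal r n * (n.descFactorial 2 : ℝ)))
      + poissonPMFReal r n * (n : ℝ)) = fun n => poissonPMFReal r n * (n : ℝ) ^ 3 := by
    funext n; rw [cast_desc3, cast_desc2]; ring
  rwa [heq] at h

lemma poisson_hasSum_pow4 (r : ℝ≥0) :
    HasSum (fun n => poissonPMFReal r n * (n : ℝ) ^ 4)
      ((r : ℝ) ^ 4 + 6 * (r : ℝ) ^ 3 + 7 * (r : ℝ) ^ 2 + (r : ℝ)) := by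
  have h := (((hasSum_poisson_descFactorial r 4).add
    ((hasSum_poisson_descFactorial r 3).mul_left 6)).add
    ((hasSum_poisson_descFactorial r 2).mul_left 7)).add (poisson_hasSum_pow1 r)
  have heq : (fun n => ((poissonPMFReal r n * (n.descFactorial 4 : ℝ)
      + 6 * (poissonPMFReal r n * (n.descFactorial 3 : ℝ)))
      + 7 * (poissonPMFReal r n * (n.descFactorial 2 : ℝ)))
      + poissonPMFReal r n * (n : ℝ)) = fun n => poissonPMFReal r n * (n : ℝ) ^ 4 := by
    funext n; rw [cast_desc4, cast_desc3, cast_desc2]; ring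
  rwa [heq] at h

lemma poissonMeasure_eq_toMeasure (r : ℝ≥0) : poissonMeasure r = (poissonPMF r).toMeasure :=
  Measure.ext_of_singleton fun n => by
    rw [PMF.toMeasure_apply_singleton _ _ (measurableSet_singleton n), poissonMeasure_singleton]
    exact poissonPMFReal_ofReal_eq_poissonPMF r n

lemma integrable_poisson_of_summable (r : ℝ≥0) (f : ℕ → ℝ)
    (h : Summable (fun n => poissonPMFReal r n * |f n|)) :
    Integrable f (poissonMeasure r) := by
  refine ⟨(measurable_from_nat (f := f)).aestronglyMeasurable, ?_⟩
  rw [HasFiniteIntegral]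
  calc ∫⁻ n, ‖f n‖₊ ∂(poissonMeasure r)
      = ∑' n, (‖f n‖₊ : ℝ≥0∞) * (poissonMeasure r) {n} := lintegral_countable' _
    _ = ∑' n, ENNReal.ofReal (poissonPMFReal r n * |f n|) := by
        congr 1; funext n
        rw [show (poissonMeasure r) {n} = poissonPMF r n from
          (poissonMeasure_singleton r n).trans (poissonPMFReal_ofReal_eq_poissonPMF r n)]
        rw [show (poissonPMF r n : ℝ≥0∞) = ENNReal.ofReal (poissonPMFReal r n) from rfl]
        rw [show ((‖f n‖₊ : ℝ≥0∞)) = ENNReal.ofReal |f n| from Real.enorm_eq_ofReal_abs (f n),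
          ← ENNReal.ofReal_mul (abs_nonneg _), mul_comm]
    _ = ENNReal.ofReal (∑' n, poissonPMFReal r n * |f n|) :=
        (ENNReal.ofReal_tsum_of_nonneg
          (fun n => mul_nonneg poissonPMFReal_nonneg (abs_nonneg _)) h).symm
    _ < ⊤ := ENNReal.ofReal_lt_top

/-- **Variance of one term of the chi-squared statistic.**
If `X ~ Poi(m qᵢ)` and `Zᵢ = (X - m/n)² - X`, then with `Δᵢ = 1/n - qᵢ`,
`Var[Zᵢ] = 2m²(Δᵢ - 1/n)² + 4m³(1/n - Δᵢ)Δᵢ²`. -/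
theorem poisson_chi_squared_variance (n : ℕ) (hn : 1 ≤ n) (q : Fin n → ℝ) (hq : IsDist q)
    (i : Fin n) (m : ℝ) (hm : 0 < m)
    (Ω : Type) [MeasurableSpace Ω] (μ : Measure Ω) [IsProbabilityMeasure μ]
    (X : Ω → ℕ) (hX : Measurable X)
    (hdist : μ.map X = poissonMeasure (m * q i).toNNReal) :
    variance (fun ω => ((X ω : ℝ) - m / n) ^ 2 - (X ω : ℝ)) μ =
      2 * m ^ 2 * ((1 / n - q i) - 1 / n) ^ 2 +
        4 * m ^ 3 * (1 / n - (1 / n - q i)) * (1 / n - q i) ^ 2 := by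
  have hq0 : 0 ≤ q i := hq.1 i
  set r : ℝ≥0 := (m * q i).toNNReal with hrdef
  have hc : (r : ℝ) = m * q i := Real.coe_toNNReal _ (mul_nonneg hm.le hq0)
  set b : ℝ := m / n with hb
  set g : ℕ → ℝ := fun k => ((k : ℝ) - b) ^ 2 - (k : ℝ) with hgdef
  have hgm : Measurable g := measurable_from_nat
  have hgsqm : Measurable (fun k => g k ^ 2) := measurable_from_nat
  -- transport variance through the map
  have hvar : variance (fun ω => ((X ω : ℝ) - b) ^ 2 - (X ω : ℝ)) μ
      = variance g (μ.map X) := by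
    have hEq : ∫ a, g a ∂(μ.map X) = ∫ ω, g (X ω) ∂μ :=
      integral_map hX.aemeasurable hgm.aestronglyMeasurable
    unfold ProbabilityTheory.variance ProbabilityTheory.evariance
    rw [hEq, lintegral_map (measurable_from_nat) hX]
  rw [hvar, hdist]
  -- abbreviations for the bound
  set B : ℝ := 2 * |b| + 1 with hB
  set C : ℝ := b ^ 2 with hC
  have habs : ∀ k : ℕ, |g k| ≤ (k : ℝ) ^ 2 + B * k + C := by
    intro k
    have h1 : ((k : ℝ)) * (-|b|) ≤ (k : ℝ) * b :=
      mul_le_mul_of_nonneg_left (neg_abs_le b) (Nat.cast_nonneg k)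
    have h2 : ((k : ℝ)) * b ≤ (k : ℝ) * |b| :=
      mul_le_mul_of_nonneg_left (le_abs_self b) (Nat.cast_nonneg k)
    have h3 : (0 : ℝ) ≤ (k : ℝ) := Nat.cast_nonneg k
    rcases abs_cases (g k) with ⟨h, _⟩ | ⟨h, _⟩ <;> rw [h] <;>
      simp only [hgdef, hB, hC] <;> nlinarith [sq_nonneg ((k : ℝ) - b), sq_nonneg b]
  have hbd : ∀ k : ℕ, (0 : ℝ) ≤ (k : ℝ) ^ 2 + B * k + C := fun k =>
    le_trans (abs_nonneg _) (habs k)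
  have hs1 : Summable (fun k => poissonPMFReal r k * ((k : ℝ) ^ 2 + B * k + C)) := by
    have h := ((poisson_hasSum_pow2 r).add ((poisson_hasSum_pow1 r).mul_left B)).add
      ((show HasSum (fun j => poissonPMFReal r j) 1 from poissonPMFRealSum r).mul_left C)
    exact h.summable.congr fun k => by ring
  have hs2 : Summable (fun k => poissonPMFReal r k * ((k : ℝ) ^ 2 + B * k + C) ^ 2) := by
    have h := (((poisson_hasSum_pow4 r).add ((poisson_hasSum_pow3 r).mul_left (2 * B))).add
      ((poisson_hasSum_pow2 r).mul_left (B ^ 2 + 2 * C))).add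
      (((poisson_hasSum_pow1 r).mul_left (2 * B * C)).add
        ((show HasSum (fun j => poissonPMFReal r j) 1 from poissonPMFRealSum r).mul_left (C ^ 2)))
    exact h.summable.congr fun k => by ring
  have hint_g : Integrable g (poissonMeasure r) := by
    refine integrable_poisson_of_summable r g (Summable.of_nonneg_of_le
      (fun k => mul_nonneg poissonPMFReal_nonneg (abs_nonneg _))
      (fun k => mul_le_mul_of_nonneg_left (habs k) poissonPMFReal_nonneg) hs1)
  have hint_gsq : Integrable (fun k => g k ^ 2) (poissonMeasure r) := by
    refine integrable_poisson_of_summable r _ (Summable.of_nonneg_of_le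
      (fun k => mul_nonneg poissonPMFReal_nonneg (abs_nonneg _))
      (fun k => mul_le_mul_of_nonneg_left ?_ poissonPMFReal_nonneg) hs2)
    rw [abs_pow]
    exact pow_le_pow_left₀ (abs_nonneg _) (habs k) 2
  have hmem : MemLp g 2 (poissonMeasure r) :=
    (memLp_two_iff_integrable_sq hgm.aestronglyMeasurable).2 hint_gsq
  rw [variance_eq_sub hmem]
  have hpm : ∀ k, ((poissonPMF r k).toReal) = poissonPMFReal r k := fun k => by
    rw [show (poissonPMF r k) = ENNReal.ofReal (poissonPMFReal r k) from rfl,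
      ENNReal.toReal_ofReal poissonPMFReal_nonneg]
  have hEg : ∫ a, g a ∂(poissonMeasure r) = ((r:ℝ) ^ 2 + (r:ℝ)) - (2 * b + 1) * (r:ℝ) + b ^ 2 := by
    rw [show poissonMeasure r = (poissonPMF r).toMeasure from poissonMeasure_eq_toMeasure r,
      PMF.integral_eq_tsum _ g (poissonMeasure_eq_toMeasure r ▸ hint_g)]
    have h := ((poisson_hasSum_pow2 r).sub ((poisson_hasSum_pow1 r).mul_left (2 * b + 1))).add
      ((show HasSum (fun j => poissonPMFReal r j) 1 from poissonPMFRealSum r).mul_left (b ^ 2))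
    have heq : (fun k => (poissonPMFReal r k * (k : ℝ) ^ 2
        - (2 * b + 1) * (poissonPMFReal r k * (k : ℝ)))
        + b ^ 2 * poissonPMFReal r k) = fun k => (poissonPMF r k).toReal • g k := by
      funext k; rw [smul_eq_mul, hpm]; simp only [hgdef]; ring
    rw [heq] at h
    rw [h.tsum_eq]; ring
  have hEg2 : ∫ a, g a ^ 2 ∂(poissonMeasure r)
      = ((r:ℝ) ^ 4 + 6 * (r:ℝ) ^ 3 + 7 * (r:ℝ) ^ 2 + (r:ℝ))
        - 2 * (2 * b + 1) * ((r:ℝ) ^ 3 + 3 * (r:ℝ) ^ 2 + (r:ℝ))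
        + ((2 * b + 1) ^ 2 + 2 * b ^ 2) * ((r:ℝ) ^ 2 + (r:ℝ))
        - 2 * (2 * b + 1) * b ^ 2 * (r:ℝ) + b ^ 4 := by
    rw [show poissonMeasure r = (poissonPMF r).toMeasure from poissonMeasure_eq_toMeasure r,
      PMF.integral_eq_tsum _ _ (poissonMeasure_eq_toMeasure r ▸ hint_gsq)]
    have h := ((((poisson_hasSum_pow4 r).sub
      ((poisson_hasSum_pow3 r).mul_left (2 * (2 * b + 1)))).add
      ((poisson_hasSum_pow2 r).mul_left ((2 * b + 1) ^ 2 + 2 * b ^ 2))).sub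
      ((poisson_hasSum_pow1 r).mul_left (2 * (2 * b + 1) * b ^ 2))).add
      ((show HasSum (fun j => poissonPMFReal r j) 1 from poissonPMFRealSum r).mul_left (b ^ 4))
    have heq : (fun k => (((poissonPMFReal r k * (k : ℝ) ^ 4
        - 2 * (2 * b + 1) * (poissonPMFReal r k * (k : ℝ) ^ 3))
        + ((2 * b + 1) ^ 2 + 2 * b ^ 2) * (poissonPMFReal r k * (k : ℝ) ^ 2))
        - 2 * (2 * b + 1) * b ^ 2 * (poissonPMFReal r k * (k : ℝ)))
        + b ^ 4 * poissonPMFReal r k) = fun k => (poissonPMF r k).toReal • g k ^ 2 := by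
      funext k; rw [smul_eq_mul, hpm]; simp only [hgdef]; ring
    rw [heq] at h
    rw [h.tsum_eq]; ring
  have hpi : (g ^ 2 : ℕ → ℝ) = fun k => g k ^ 2 := rfl
  rw [hpi, hEg2, hEg, hc, hb]
  ring
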